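/- The Green's function g(x,y) on Σ_N^+ × Σ_N^+ satisfies the bound 0 ≤ g(x,y) ≤ (2ρ(x,y) - 3)/N for all x ≠ y with ρ(x,y) ≥ 2, and g(x,y) = 0 when ρ(x,y) = 1. -/
import Mathlib

noncomputable def rho (N : ℕ) (x y : ℕ → Fin N) : ℕ := sInf {i | x i ≠ y i} + 1

/-- `V_m`: the sequences that are constant from position `m+1` onward. -/
def Vset (N m : ℕ) : Set (ℕ → Fin N) := {x | ∀ i, m ≤ i → x i = x m}

open Classical in
/-- `χ_r^m`: the indicator of the cylinder `[r_1 ⋯ r_{m+1}]` (first `m+1` coordinates of `r`). -/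
noncomputable def chi (N m : ℕ) (r x : ℕ → Fin N) : ℝ := if ∀ i ≤ m, x i = r i then 1 else 0

open Classical in
/-- The entries of `G_m`: `2/N` on the diagonal, `1/N` for distinct `m`-related points,
`0` otherwise. -/
noncomputable def Gmat (N m : ℕ) (r s : ℕ → Fin N) : ℝ :=
  if r = s then 2 / N else if ∀ i < m, r i = s i then 1 / N else 0

/-- The Green's function
`g(x,y) = Σ_{m=1}^{ρ(x,y)-1} Σ_{r,s ∈ V_m \ V_{m-1}} (G_m)_{rs} χ_r^m(x) χ_s^m(y)`. -/
noncomputable def green (N : ℕ) (x y : ℕ → Fin N) : ℝ :=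
  ∑ m ∈ Finset.Icc 1 (rho N x y - 1),
    ∑ᶠ r ∈ Vset N m \ Vset N (m - 1), ∑ᶠ s ∈ Vset N m \ Vset N (m - 1),
      Gmat N m r s * chi N m r x * chi N m s y

lemma chi_canon (N m : ℕ) (y : ℕ → Fin N) :
    chi N m (fun i => y (min i m)) y = 1 := by
  unfold chi
  rw [if_pos]
  intro i hi
  simp [min_eq_left hi]

open Classical in
lemma finsum_chi (N m : ℕ) (y : ℕ → Fin N) (D : Set (ℕ → Fin N)) (hD : D ⊆ Vset N m)
    (f : (ℕ → Fin N) → ℝ) :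
    ∑ᶠ s ∈ D, f s * chi N m s y =
      if (fun i => y (min i m)) ∈ D then f (fun i => y (min i m)) else 0 := by
  classical
  set sy : ℕ → Fin N := fun i => y (min i m) with hsy
  rw [finsum_mem_def, finsum_eq_single _ sy, Set.indicator_apply]
  · split_ifs with h
    · rw [chi_canon N m y, mul_one]
    · rfl
  · intro s hs
    rw [Set.indicator_apply]
    split_ifs with hmem
    · suffices h : chi N m s y = 0 by rw [h, mul_zero]
      unfold chi
      rw [if_neg]
      intro hall
      apply hs
      funext i
      rcases le_or_gt i m with h1 | h1
      · simp [hsy, min_eq_left h1, (hall i h1).symm]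
      · have h2 : s i = s m := hD hmem i h1.le
        rw [h2, ← hall m le_rfl]
        simp only [hsy]
        rw [min_eq_right h1.le]
    · rfl

open Classical in
noncomputable def Tfun (N : ℕ) (x y : ℕ → Fin N) (m : ℕ) : ℝ :=
  if (fun i => x (min i m)) ∈ Vset N m \ Vset N (m-1) ∧
      (fun i => y (min i m)) ∈ Vset N m \ Vset N (m-1)
   then Gmat N m (fun i => x (min i m)) (fun i => y (min i m)) else 0

lemma green_eq (N : ℕ) (x y : ℕ → Fin N) :
    green N x y = ∑ m ∈ Finset.Icc 1 (rho N x y - 1), Tfun N x y m := by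
  unfold Tfun
  classical
  unfold green
  refine Finset.sum_congr rfl fun m _ => ?_
  have hD : Vset N m \ Vset N (m-1) ⊆ Vset N m := Set.diff_subset
  have h1 := fun r => finsum_chi N m y _ hD (fun s => Gmat N m r s * chi N m r x)
  simp only [h1]
  by_cases hy : (fun i => y (min i m)) ∈ Vset N m \ Vset N (m-1)
  · simp only [hy, if_true, and_true]
    rw [finsum_chi N m x _ hD (fun r => Gmat N m r (fun i => y (min i m)))]
    split_ifs <;> rfl
  · simp only [hy, if_false, and_false, finsum_mem_zero]

lemma Gmat_nonneg (N m : ℕ) (r s : ℕ → Fin N) : 0 ≤ Gmat N m r s := by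
  unfold Gmat
  split_ifs <;> positivity

lemma Gmat_le (N m : ℕ) (r s : ℕ → Fin N) : Gmat N m r s ≤ 2 / N := by
  unfold Gmat
  split_ifs with h1 h2
  · exact le_rfl
  · rcases Nat.eq_zero_or_pos N with h | h
    · simp [h]
    · have hN : (0:ℝ) < N := by exact_mod_cast h
      gcongr
      norm_num
  · positivity

lemma Gmat_le_one_div (N m : ℕ) (r s : ℕ → Fin N) (h : r ≠ s) : Gmat N m r s ≤ 1 / N := by
  unfold Gmat
  rw [if_neg h]
  split_ifs
  · exact le_rfl
  · positivity

theorem green_function_bounds (N : ℕ) (hN : 2 ≤ N) (x y : ℕ → Fin N) (hxy : x ≠ y) :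
    (2 ≤ rho N x y →
      0 ≤ green N x y ∧ green N x y ≤ (2 * (rho N x y : ℝ) - 3) / N) ∧
    (rho N x y = 1 → green N x y = 0) := by
  classical
  have hNR : (0:ℝ) < N := by exact_mod_cast (by omega : 0 < N)
  constructor
  · intro hr
    set ρ := rho N x y with hρ
    set T : ℕ → ℝ := Tfun N x y with hT
    have hTnonneg : ∀ m, 0 ≤ T m := by
      intro m
      rw [hT]
      unfold Tfun
      split_ifs
      · exact Gmat_nonneg _ _ _ _
      · exact le_rfl
    have hTle : ∀ m, T m ≤ 2 / N := by
      intro m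
      rw [hT]
      unfold Tfun
      split_ifs
      · exact Gmat_le _ _ _ _
      · positivity
    have hgreen : green N x y = ∑ m ∈ Finset.Icc 1 (ρ - 1), T m := green_eq N x y
    constructor
    · rw [hgreen]
      exact Finset.sum_nonneg fun m _ => hTnonneg m
    · -- key: at m = ρ - 1, the canonical points differ
      set k := ρ - 1 with hk
      have hk1 : 1 ≤ k := by omega
      have hinf : k = sInf {i | x i ≠ y i} := by
        simp only [hk, hρ, rho]
        omega
      have hne : x k ≠ y k := by
        rw [hinf]
        exact Nat.sInf_mem (Function.ne_iff.mp hxy)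
      have hrs : (fun i => x (min i k)) ≠ (fun i => y (min i k)) := by
        intro h
        apply hne
        have := congrFun h k
        simpa using this
      have hTk : T k ≤ 1 / N := by
        rw [hT]
        unfold Tfun
        split_ifs
        · exact Gmat_le_one_div _ _ _ _ hrs
        · positivity
      rw [hgreen]
      have hsplit : ∑ m ∈ Finset.Icc 1 k, T m
          = ∑ m ∈ Finset.Icc 1 (k-1), T m + T k := by
        have : k = (k - 1) + 1 := by omega
        rw [this, Finset.sum_Icc_succ_top (by omega)]
        rw [← this]
      rw [hsplit]
      have h1 : ∑ m ∈ Finset.Icc 1 (k-1), T m ≤ ((k - 1 : ℕ) : ℝ) * (2 / N) := by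
        have := Finset.sum_le_card_nsmul (Finset.Icc 1 (k-1)) T (2 / N)
          (fun m _ => hTle m)
        rw [Nat.card_Icc] at this
        simpa [nsmul_eq_mul] using this
      have hcast : ((k - 1 : ℕ) : ℝ) = (ρ : ℝ) - 2 := by
        have : (k : ℕ) - 1 = ρ - 2 := by omega
        rw [this]
        have h2 : 2 ≤ ρ := hr
        push_cast [Nat.cast_sub h2]
        ring
      calc ∑ m ∈ Finset.Icc 1 (k-1), T m + T k
          ≤ ((k - 1 : ℕ) : ℝ) * (2 / N) + 1 / N := add_le_add h1 hTk
        _ = (2 * (ρ : ℝ) - 3) / N := by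
            rw [hcast]
            field_simp
            ring
  · intro h
    unfold green
    rw [h]
    simp
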